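/- Let Φ be the conjunctive network with firing memory associated to a finite simple (non-directed) graph G and maximum delays dt, and let y be a configuration in which every node whose Boolean state is 0 has delay 0. If node i satisfies x_i = 0 and F(x)_i = 0 (where F is the conjunctive network on G and x is the Boolean part of y), then for every t ≥ 1 the Boolean state of node i in Φ^t(y) is 0. -/
import Mathlib


open Classical in
/-- The conjunctive network on a finite simple graph `G`:
`F(x)_i = ⋀_{j adjacent to i} x_j`. -/
noncomputable def conjNet {V : Type*} [Fintype V] (G : SimpleGraph V)
    (x : V → Bool) : V → Bool :=
  fun i => if ∀ j, G.Adj i j → x j = true then true else false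

/-- One step of the conjunctive network with firing memory on `G` with
maximum delays `dt`.  A configuration assigns to each node a pair
`(xᵢ, Δᵢ)` of a Boolean state and a delay. -/
noncomputable def fmStep {V : Type*} [Fintype V] (G : SimpleGraph V) (dt : V → ℕ)
    (y : V → Bool × ℕ) : V → Bool × ℕ :=
  fun i =>
    let f := conjNet G (fun j => (y j).1) i
    let d : ℕ := if f = true then dt i else (y i).2 - 1
    (if 1 ≤ d then true else f, d)

lemma conjNet_eq_false_iff {V : Type*} [Fintype V] (G : SimpleGraph V)
    (x : V → Bool) (i : V) :
    conjNet G x i = false ↔ ∃ j, G.Adj i j ∧ x j = false := by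
  unfold conjNet
  split
  · next h =>
    simp only [Bool.true_eq_false, false_iff]
    rintro ⟨j, hj, hxj⟩
    simp [h j hj] at hxj
  · next h =>
    push_neg at h
    simpa using h

lemma fmStep_false {V : Type*} [Fintype V] (G : SimpleGraph V) (dt : V → ℕ)
    (y : V → Bool × ℕ) (i : V)
    (hF : conjNet G (fun j => (y j).1) i = false) (hd : (y i).2 = 0) :
    fmStep G dt y i = (false, 0) := by
  unfold fmStep
  simp [hF, hd]

/-- in a conjunctive network with firing memory, if in a
configuration every node with Boolean state `0` has delay `0`, and node `i`
satisfies `xᵢ = 0` and `F(x)ᵢ = 0`, then the Boolean state of node `i` stays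
`0` forever (for every `t ≥ 1`). -/
theorem zero_stays_zero {n : ℕ} (G : SimpleGraph (Fin n)) (dt : Fin n → ℕ)
    (hdt : ∀ i, 1 ≤ dt i) (y : Fin n → Bool × ℕ)
    (hy : ∀ i, (y i).1 = false → (y i).2 = 0)
    (i : Fin n) (hx : (y i).1 = false)
    (hF : conjNet G (fun j => (y j).1) i = false) :
    ∀ t : ℕ, 1 ≤ t → (((fmStep G dt)^[t] y) i).1 = false := by
  obtain ⟨j, hij, hxj⟩ := (conjNet_eq_false_iff G _ i).mp hF
  -- invariant
  suffices h : ∀ t, ((fmStep G dt)^[t+1] y) i = (false, 0) ∧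
      ((fmStep G dt)^[t+1] y) j = (false, 0) by
    intro t ht
    obtain ⟨s, rfl⟩ := Nat.exists_eq_add_of_le ht
    rw [Nat.add_comm]
    rw [(h s).1]
  intro t
  induction t with
  | zero =>
    have hFj : conjNet G (fun k => (y k).1) j = false :=
      (conjNet_eq_false_iff G _ j).mpr ⟨i, hij.symm, hx⟩
    simp only [zero_add, Function.iterate_one]
    exact ⟨fmStep_false G dt y i hF (hy i hx),
      fmStep_false G dt y j hFj (hy j hxj)⟩
  | succ t ih =>
    set z := (fmStep G dt)^[t+1] y with hz
    have hFi : conjNet G (fun k => (z k).1) i = false :=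
      (conjNet_eq_false_iff G _ i).mpr ⟨j, hij, by rw [ih.2]⟩
    have hFj : conjNet G (fun k => (z k).1) j = false :=
      (conjNet_eq_false_iff G _ j).mpr ⟨i, hij.symm, by rw [ih.1]⟩
    have hdi : (z i).2 = 0 := by rw [ih.1]
    have hdj : (z j).2 = 0 := by rw [ih.2]
    rw [Function.iterate_succ_apply', ← hz]
    exact ⟨fmStep_false G dt z i hFi hdi, fmStep_false G dt z j hFj hdj⟩
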